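/- Let ψ, φ ∈ S(ℝ^d), d ≥ 2, and fix j ≥ 0 and ℓ ∈ ℤ^{d-1} with |ℓ_i| ≤ 2^j. Then for every N > d there exists C_N > 0 (independent of j and ℓ) such that for all x ∈ ℝ^d, ∫_{ℝ^d} |ψ(B^{[ℓ]} A^j (x-y))| · |φ(2^{2j} y)| dy ≤ C_N · 2^{-(d+1)j} · (1 + 2^j |x|)^{-N}. -/

import Mathlib

open MeasureTheory

noncomputable section

def shearletA (d j : ℕ) [NeZero d] : Matrix (Fin d) (Fin d) ℝ :=
  Matrix.diagonal (fun i => if i = 0 then (4 : ℝ) ^ j else (2 : ℝ) ^ j)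

def shearletB (d : ℕ) [NeZero d] (ℓ : Fin d → ℤ) : Matrix (Fin d) (Fin d) ℝ :=
  Matrix.of fun i k => if i = k then 1 else if i = 0 then (ℓ k : ℝ) else 0

def matVec {d : ℕ} (M : Matrix (Fin d) (Fin d) ℝ) (x : EuclideanSpace ℝ (Fin d)) :
    EuclideanSpace ℝ (Fin d) :=
  (WithLp.equiv 2 (Fin d → ℝ)).symm (M.mulVec (WithLp.equiv 2 (Fin d → ℝ) x))

lemma matVec_apply {d : ℕ} (M : Matrix (Fin d) (Fin d) ℝ) (x : EuclideanSpace ℝ (Fin d)) (k : Fin d) :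
    matVec M x k = ∑ m, M k m * x m := rfl

lemma shearletB_det (d : ℕ) [NeZero d] (ℓ : Fin d → ℤ) : (shearletB d ℓ).det = 1 := by
  have h : (shearletB d ℓ).BlockTriangular id := by
    intro i k hki
    have h1 : i ≠ k := fun h => absurd (h ▸ hki) (lt_irrefl _)
    have h2 : i ≠ 0 := by
      intro h; subst h; exact absurd hki (by simpa using Fin.zero_le' k)
    simp [shearletB, h1, h2]
  rw [Matrix.det_of_upperTriangular h]
  simp [shearletB]

lemma shearlet_det (d j : ℕ) [NeZero d] (ℓ : Fin d → ℤ) :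
    (shearletB d ℓ * shearletA d j).det = 2 ^ ((d + 1) * j) := by
  obtain ⟨e, rfl⟩ : ∃ e, d = e + 1 := ⟨d - 1, by have := NeZero.ne d; omega⟩
  rw [Matrix.det_mul, shearletB_det, one_mul, shearletA, Matrix.det_diagonal]
  rw [← Finset.mul_prod_erase Finset.univ _ (Finset.mem_univ (0 : Fin (e+1)))]
  rw [if_pos rfl]
  rw [Finset.prod_congr rfl (fun i hi => if_neg (Finset.ne_of_mem_erase hi))]
  rw [Finset.prod_const, Finset.card_erase_of_mem (Finset.mem_univ _), Finset.card_univ,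
    Fintype.card_fin]
  rw [show (4:ℝ) = 2^2 by norm_num, ← pow_mul, ← pow_mul, ← pow_add]
  congr 1
  simp
  ring

lemma shearletBA_apply (d j : ℕ) [NeZero d] (ℓ : Fin d → ℤ) (i k : Fin d) :
    (shearletB d ℓ * shearletA d j) i k =
      (if i = k then 1 else if i = 0 then (ℓ k : ℝ) else 0) * (if k = 0 then (4:ℝ)^j else 2^j) := by
  rw [show shearletA d j = Matrix.diagonal _ from rfl, Matrix.mul_diagonal]; rfl

lemma matVec_BA_ne_zero {d j : ℕ} [NeZero d] (ℓ : Fin d → ℤ) (z : EuclideanSpace ℝ (Fin d))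
    {k : Fin d} (hk : k ≠ 0) :
    matVec (shearletB d ℓ * shearletA d j) z k = 2^j * z k := by
  rw [matVec_apply, Finset.sum_eq_single k]
  · rw [shearletBA_apply, if_pos rfl, if_neg hk, one_mul]
  · intro m _ hm
    rw [shearletBA_apply, if_neg (Ne.symm hm), if_neg hk, zero_mul, zero_mul]
  · exact fun h => absurd (Finset.mem_univ k) h

lemma matVec_BA_zero {d j : ℕ} [NeZero d] (ℓ : Fin d → ℤ) (z : EuclideanSpace ℝ (Fin d)) :
    matVec (shearletB d ℓ * shearletA d j) z 0
      = 4^j * z 0 + ∑ m ∈ Finset.univ.erase 0, (ℓ m : ℝ) * (2^j * z m) := by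
  rw [matVec_apply, ← Finset.add_sum_erase _ _ (Finset.mem_univ (0 : Fin d))]
  congr 1
  · rw [shearletBA_apply, if_pos rfl, if_pos rfl, one_mul]
  · refine Finset.sum_congr rfl fun m hm => ?_
    have hm0 : m ≠ 0 := Finset.ne_of_mem_erase hm
    rw [shearletBA_apply, if_neg (fun h => hm0 h.symm), if_pos rfl, if_neg hm0]
    ring

lemma coord_le_norm {d : ℕ} (w : EuclideanSpace ℝ (Fin d)) (i : Fin d) : |w i| ≤ ‖w‖ := by
  rw [EuclideanSpace.norm_eq, ← Real.sqrt_sq_eq_abs]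
  apply Real.sqrt_le_sqrt
  calc (w i)^2 = ‖w i‖^2 := by rw [Real.norm_eq_abs, sq_abs]
    _ ≤ _ := Finset.single_le_sum (fun m _ => sq_nonneg ‖w m‖) (Finset.mem_univ i)

lemma key_norm_bound {d j : ℕ} [NeZero d] (ℓ : Fin d → ℤ)
    (hℓ : ∀ t : Fin d, t ≠ 0 → |ℓ t| ≤ 2 ^ j) (z : EuclideanSpace ℝ (Fin d)) :
    2^j * ‖z‖ ≤ (d:ℝ)^2 * ‖matVec (shearletB d ℓ * shearletA d j) z‖ := by
  set u := matVec (shearletB d ℓ * shearletA d j) z with hu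
  have hdn : 1 ≤ d := Nat.one_le_iff_ne_zero.mpr (NeZero.ne d)
  have hd1 : (1:ℝ) ≤ d := by exact_mod_cast hdn
  have h2j : (0:ℝ) < 2^j := by positivity
  have h2j1 : (1:ℝ) ≤ 2^j := one_le_pow₀ (by norm_num)
  have hcast : ((d-1:ℕ):ℝ) + 1 = d := by
    rw [Nat.cast_sub hdn]; push_cast; ring
  have hcoord : ∀ i : Fin d, 2^j * |z i| ≤ (d:ℝ) * ‖u‖ := by
    intro i
    by_cases hi : i = 0
    · subst hi
      have h0 : u 0 = 4^j * z 0 + ∑ m ∈ Finset.univ.erase (0 : Fin d), (ℓ m : ℝ) * u m := by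
        rw [hu, matVec_BA_zero]
        congr 1
        refine Finset.sum_congr rfl fun m hm => ?_
        rw [matVec_BA_ne_zero ℓ z (Finset.ne_of_mem_erase hm)]
      have hsub : (4:ℝ)^j * z 0 = u 0 - ∑ m ∈ Finset.univ.erase (0 : Fin d), (ℓ m : ℝ) * u m := by
        rw [h0]; ring
      have hterm : ∀ m ∈ Finset.univ.erase (0 : Fin d), |(ℓ m : ℝ) * u m| ≤ (2:ℝ)^j * ‖u‖ := by
        intro m hm
        rw [abs_mul]
        have hm0 := Finset.ne_of_mem_erase hm
        have hℓm : |(ℓ m : ℝ)| ≤ 2^j := by exact_mod_cast hℓ m hm0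
        exact mul_le_mul hℓm (coord_le_norm u m) (abs_nonneg _) (by positivity)
      have hcard : (Finset.univ.erase (0 : Fin d)).card = d - 1 := by
        rw [Finset.card_erase_of_mem (Finset.mem_univ _), Finset.card_univ, Fintype.card_fin]
      have h1 : (4:ℝ)^j * |z 0| ≤ |u 0| + ((d-1:ℕ):ℝ) * ((2:ℝ)^j * ‖u‖) :=
        calc (4:ℝ)^j * |z 0| = |(4:ℝ)^j * z 0| := by
              rw [abs_mul, abs_of_pos (by positivity : (0:ℝ) < 4^j)]
          _ = |u 0 - ∑ m ∈ Finset.univ.erase (0 : Fin d), (ℓ m : ℝ) * u m| := by rw [hsub]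
          _ ≤ |u 0| + |∑ m ∈ Finset.univ.erase (0 : Fin d), (ℓ m : ℝ) * u m| := abs_sub _ _
          _ ≤ |u 0| + ∑ m ∈ Finset.univ.erase (0 : Fin d), |(ℓ m : ℝ) * u m| :=
              add_le_add le_rfl (Finset.abs_sum_le_sum_abs _ _)
          _ ≤ |u 0| + ∑ _m ∈ Finset.univ.erase (0 : Fin d), (2:ℝ)^j * ‖u‖ :=
              add_le_add le_rfl (Finset.sum_le_sum hterm)
          _ = |u 0| + ((d-1:ℕ):ℝ) * ((2:ℝ)^j * ‖u‖) := by
              rw [Finset.sum_const, hcard, nsmul_eq_mul]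
      have h2 : 2^j * (2^j * |z 0|) ≤ 2^j * ((d:ℝ) * ‖u‖) := by
        have h4 : (4:ℝ)^j = 2^j * 2^j := by
          rw [show (4:ℝ) = 2*2 by norm_num, mul_pow]
        have hu0 : |u 0| ≤ ‖u‖ := coord_le_norm u 0
        calc 2^j * (2^j * |z 0|) = (4:ℝ)^j * |z 0| := by rw [h4]; ring
          _ ≤ |u 0| + ((d-1:ℕ):ℝ) * ((2:ℝ)^j * ‖u‖) := h1
          _ ≤ 2^j * ‖u‖ + ((d-1:ℕ):ℝ) * ((2:ℝ)^j * ‖u‖) := by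
              gcongr
              calc |u 0| ≤ ‖u‖ := hu0
                _ = 1 * ‖u‖ := by ring
                _ ≤ 2^j * ‖u‖ := by gcongr
          _ = (((d-1:ℕ):ℝ) + 1) * ((2:ℝ)^j * ‖u‖) := by ring
          _ = 2^j * ((d:ℝ) * ‖u‖) := by rw [hcast]; ring
      exact le_of_mul_le_mul_left h2 h2j
    · have hui : u i = 2^j * z i := by rw [hu, matVec_BA_ne_zero ℓ z hi]
      calc 2^j * |z i| = |u i| := by
            rw [hui, abs_mul, abs_of_pos h2j]
        _ ≤ ‖u‖ := coord_le_norm u i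
        _ = 1 * ‖u‖ := by ring
        _ ≤ (d:ℝ) * ‖u‖ := by gcongr
  have hsq : (2^j * ‖z‖)^2 ≤ ((d:ℝ)^2 * ‖u‖)^2 := by
    have hz : ‖z‖^2 = ∑ i, ‖z i‖^2 := by
      rw [EuclideanSpace.norm_eq, Real.sq_sqrt (by positivity)]
    calc (2^j * ‖z‖)^2 = ∑ i, ((2:ℝ)^j * |z i|)^2 := by
          rw [mul_pow, hz, Finset.mul_sum]
          refine Finset.sum_congr rfl fun i _ => ?_
          rw [mul_pow, Real.norm_eq_abs]
      _ ≤ ∑ _i : Fin d, ((d:ℝ) * ‖u‖)^2 :=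
          Finset.sum_le_sum fun i _ => pow_le_pow_left₀ (by positivity) (hcoord i) 2
      _ = (d:ℝ) * ((d:ℝ) * ‖u‖)^2 := by
          rw [Finset.sum_const, Finset.card_univ, Fintype.card_fin, nsmul_eq_mul]
      _ ≤ ((d:ℝ)^2 * ‖u‖)^2 := by nlinarith [norm_nonneg u]
  have h1 : (0:ℝ) ≤ (d:ℝ)^2 * ‖u‖ := by positivity
  have h3 := Real.sqrt_le_sqrt hsq
  rwa [Real.sqrt_sq (by positivity), Real.sqrt_sq h1] at h3



def matL (d : ℕ) (M : Matrix (Fin d) (Fin d) ℝ) : EuclideanSpace ℝ (Fin d) →ₗ[ℝ] EuclideanSpace ℝ (Fin d) :=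
  (WithLp.linearEquiv 2 ℝ (Fin d → ℝ)).symm.toLinearMap ∘ₗ Matrix.toLin' M ∘ₗ (WithLp.linearEquiv 2 ℝ (Fin d → ℝ)).toLinearMap

lemma matL_apply {d : ℕ} (M : Matrix (Fin d) (Fin d) ℝ) (x) : matL d M x = matVec M x := rfl

lemma matL_det {d : ℕ} (M : Matrix (Fin d) (Fin d) ℝ) : LinearMap.det (matL d M) = M.det := by
  have : matL d M = ((WithLp.linearEquiv 2 ℝ (Fin d → ℝ)).symm : (Fin d → ℝ) ≃ₗ[ℝ] _) ∘ₗ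
      Matrix.toLin' M ∘ₗ ((WithLp.linearEquiv 2 ℝ (Fin d → ℝ)).symm : (Fin d → ℝ) ≃ₗ[ℝ] _).symm := rfl
  rw [this, LinearMap.det_conj, LinearMap.det_toLin']

example (d : ℕ) (f : EuclideanSpace ℝ (Fin d) → ℝ) (x : EuclideanSpace ℝ (Fin d)) :
    ∫ y, f (x - y) = ∫ y, f y := integral_sub_left_eq_self f volume x

lemma integrable_comp_matL {d : ℕ} (M : Matrix (Fin d) (Fin d) ℝ) (hM : M.det ≠ 0)
    (g : EuclideanSpace ℝ (Fin d) → ℝ) (hg : Continuous g) (hgi : Integrable g) :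
    Integrable (fun y => g (matVec M y)) := by
  have hdet : LinearMap.det (matL d M) ≠ 0 := by rw [matL_det]; exact hM
  have hmap : Measure.map (matL d M) volume =
      ENNReal.ofReal |(LinearMap.det (matL d M))⁻¹| • volume :=
    Measure.map_linearMap_addHaar_eq_smul_addHaar volume hdet
  have hL : Measurable (matL d M) := (matL d M).continuous_of_finiteDimensional.measurable
  have h2 : Integrable g (Measure.map (matL d M) volume) := by
    rw [hmap]; exact hgi.smul_measure ENNReal.ofReal_ne_top
  exact (integrable_map_measure hg.aestronglyMeasurable hL.aemeasurable).mp h2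

lemma integral_comp_matL {d : ℕ} (M : Matrix (Fin d) (Fin d) ℝ) (hM : M.det ≠ 0)
    (g : EuclideanSpace ℝ (Fin d) → ℝ) (hg : Continuous g) :
    (∫ y, g (matVec M y)) = |M.det|⁻¹ * ∫ z, g z := by
  have hdet : LinearMap.det (matL d M) ≠ 0 := by rw [matL_det]; exact hM
  have hmap : Measure.map (matL d M) volume =
      ENNReal.ofReal |(LinearMap.det (matL d M))⁻¹| • volume :=
    Measure.map_linearMap_addHaar_eq_smul_addHaar volume hdet
  have hL : Measurable (matL d M) := (matL d M).continuous_of_finiteDimensional.measurable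
  calc ∫ y, g (matVec M y) = ∫ z, g z ∂(Measure.map (matL d M) volume) :=
        (integral_map hL.aemeasurable hg.aestronglyMeasurable).symm
    _ = |M.det|⁻¹ * ∫ z, g z := by
        rw [hmap, integral_smul_measure, ENNReal.toReal_ofReal (abs_nonneg _), matL_det,
          abs_inv, smul_eq_mul]


lemma key_ineq {d j : ℕ} [NeZero d] (ℓ : Fin d → ℤ)
    (hℓ : ∀ t : Fin d, t ≠ 0 → |ℓ t| ≤ 2 ^ j) (x y : EuclideanSpace ℝ (Fin d)) :
    1 + (2:ℝ)^j * ‖x‖ ≤ ((d:ℝ)^2 + 1) *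
      ((1 + ‖matVec (shearletB d ℓ * shearletA d j) (x - y)‖) *
        (1 + ‖((2:ℝ)^(2*j)) • y‖)) := by
  have h2j : (0:ℝ) < 2^j := by positivity
  have hnu : (0:ℝ) ≤ ‖matVec (shearletB d ℓ * shearletA d j) (x - y)‖ := norm_nonneg _
  have hnv : (0:ℝ) ≤ ‖((2:ℝ)^(2*j)) • y‖ := norm_nonneg _
  have h1 : ‖x‖ ≤ ‖x - y‖ + ‖y‖ := by
    calc ‖x‖ = ‖(x - y) + y‖ := by rw [sub_add_cancel]
      _ ≤ ‖x - y‖ + ‖y‖ := norm_add_le _ _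
  have h2 : (2:ℝ)^j * ‖x - y‖ ≤ (d:ℝ)^2 * ‖matVec (shearletB d ℓ * shearletA d j) (x - y)‖ :=
    key_norm_bound ℓ hℓ (x - y)
  have h3 : (2:ℝ)^j * ‖y‖ ≤ ‖((2:ℝ)^(2*j)) • y‖ := by
    have hvn : ‖((2:ℝ)^(2*j)) • y‖ = (2:ℝ)^(2*j) * ‖y‖ := by
      rw [norm_smul, Real.norm_eq_abs, abs_of_pos (by positivity)]
    rw [hvn]
    have h23 : (2:ℝ)^j ≤ (2:ℝ)^(2*j) := by
      apply pow_le_pow_right₀ (by norm_num)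
      omega
    nlinarith [norm_nonneg y]
  have h4 : 1 + (2:ℝ)^j * ‖x‖ ≤
      1 + (d:ℝ)^2 * ‖matVec (shearletB d ℓ * shearletA d j) (x - y)‖ +
        ‖((2:ℝ)^(2*j)) • y‖ := by
    have h5 : (2:ℝ)^j * ‖x‖ ≤ (2:ℝ)^j * (‖x - y‖ + ‖y‖) :=
      mul_le_mul_of_nonneg_left h1 h2j.le
    have h6 : (2:ℝ)^j * (‖x - y‖ + ‖y‖) = (2:ℝ)^j * ‖x - y‖ + (2:ℝ)^j * ‖y‖ := by ring
    linarith
  refine h4.trans ?_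
  nlinarith [sq_nonneg (d:ℝ), mul_nonneg hnu hnv, hnu, hnv]

lemma aux_real (m dp : ℕ) (N Cψ Cφ c a b t P Q : ℝ) (ha1 : 1 ≤ a) (hb1 : 1 ≤ b) (ht1 : 1 ≤ t)
    (hc1 : 1 ≤ c) (hCψ : 0 < Cψ) (hCφ : 0 < Cφ) (hNm : N ≤ (m:ℝ)) (hkey : t ≤ c * (a * b))
    (hP0 : 0 ≤ P) (hQ0 : 0 ≤ Q)
    (hP : P ≤ Cψ / a^(m + dp)) (hQ : Q ≤ Cφ / b^m) :
    P * Q ≤ (Cψ * Cφ * c^m * t^(-N)) * (a^dp)⁻¹ := by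
  have ha0 : (0:ℝ) < a := lt_of_lt_of_le one_pos ha1
  have hb0 : (0:ℝ) < b := lt_of_lt_of_le one_pos hb1
  have ht0 : (0:ℝ) < t := lt_of_lt_of_le one_pos ht1
  have hc0 : (0:ℝ) < c := lt_of_lt_of_le one_pos hc1
  have htm : (c^m * (a^m * b^m))⁻¹ ≤ t^(-N) := by
    have e1 : t^(-(m:ℝ)) ≤ t^(-N) := by
      apply Real.rpow_le_rpow_of_exponent_le ht1
      linarith
    have e2 : t^(-(m:ℝ)) = (t^m)⁻¹ := by
      rw [← Real.rpow_natCast t m, ← Real.rpow_neg ht0.le]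
    have e3 : t^m ≤ c^m * (a^m * b^m) := by
      calc t^m ≤ (c * (a * b))^m := pow_le_pow_left₀ ht0.le hkey m
        _ = c^m * (a^m * b^m) := by rw [mul_pow, mul_pow]
    have e4 : (c^m * (a^m * b^m))⁻¹ ≤ (t^m)⁻¹ := by
      apply inv_anti₀ (pow_pos ht0 m) e3
    rw [← e2] at e4
    linarith
  calc P * Q ≤ (Cψ / a^(m + dp)) * (Cφ / b^m) :=
        mul_le_mul hP hQ hQ0 (by positivity)
    _ = (Cψ * Cφ * c^m) * (c^m * (a^m * b^m))⁻¹ * (a^dp)⁻¹ := by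
        rw [pow_add]
        field_simp
    _ ≤ (Cψ * Cφ * c^m) * t^(-N) * (a^dp)⁻¹ := by
        apply mul_le_mul_of_nonneg_right _ (by positivity)
        apply mul_le_mul_of_nonneg_left htm (by positivity)
    _ = (Cψ * Cφ * c^m * t^(-N)) * (a^dp)⁻¹ := by ring

/-- Almost orthogonality between a shear anisotropic dilation and a dyadic isotropic
dilation: `∫ |ψ(B^[ℓ]A^j(x-y))| |φ(2^{2j}y)| dy ≤ C_N 2^{-(d+1)j} (1+2^j|x|)^{-N}`. -/
theorem conv_shearlet_wavelet_decay (d : ℕ) [NeZero d] (hd : 2 ≤ d)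
    (ψ φ : SchwartzMap (EuclideanSpace ℝ (Fin d)) ℂ) :
    ∀ N : ℝ, (d : ℝ) < N → ∃ C : ℝ, 0 < C ∧
      ∀ (j : ℕ) (ℓ : Fin d → ℤ), (∀ t : Fin d, t ≠ 0 → |ℓ t| ≤ 2 ^ j) →
        ∀ x : EuclideanSpace ℝ (Fin d),
          (∫ y : EuclideanSpace ℝ (Fin d),
              ‖ψ (matVec (shearletB d ℓ * shearletA d j) (x - y))‖ *
                ‖φ (((2 : ℝ) ^ (2 * j)) • y)‖) ≤
            C * (2 : ℝ) ^ (-(((d + 1) * j : ℕ) : ℤ)) * (1 + (2 : ℝ) ^ j * ‖x‖) ^ (-N) := by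
  intro N hN
  classical
  set m : ℕ := ⌈N⌉₊ with hm
  set K : ℕ := m + (d + 1) with hK
  set c : ℝ := (d:ℝ)^2 + 1 with hc
  have hc1 : (1:ℝ) ≤ c := by
    rw [hc]; nlinarith [sq_nonneg (d:ℝ)]
  -- Schwartz bounds
  set Cψ : ℝ := 2^K * ((Finset.Iic ((K : ℕ), (0:ℕ))).sup
      (fun p => SchwartzMap.seminorm ℝ p.1 p.2) ψ) + 1 with hCψ
  set Cφ : ℝ := 2^m * ((Finset.Iic ((m : ℕ), (0:ℕ))).sup
      (fun p => SchwartzMap.seminorm ℝ p.1 p.2) φ) + 1 with hCφ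
  have hCψ0 : 0 < Cψ := by
    have h := apply_nonneg (((Finset.Iic ((K : ℕ), (0:ℕ))).sup
      (fun p => SchwartzMap.seminorm ℝ p.1 p.2) :
        Seminorm ℝ (SchwartzMap (EuclideanSpace ℝ (Fin d)) ℂ))) ψ
    positivity
  have hCφ0 : 0 < Cφ := by
    have h := apply_nonneg (((Finset.Iic ((m : ℕ), (0:ℕ))).sup
      (fun p => SchwartzMap.seminorm ℝ p.1 p.2) :
        Seminorm ℝ (SchwartzMap (EuclideanSpace ℝ (Fin d)) ℂ))) φ
    positivity
  have hψb : ∀ u : EuclideanSpace ℝ (Fin d), ‖ψ u‖ ≤ Cψ / (1+‖u‖)^K := by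
    intro u
    have h := SchwartzMap.one_add_le_sup_seminorm_apply (𝕜 := ℝ) (m := ((K:ℕ), (0:ℕ)))
      (k := K) (n := 0) le_rfl le_rfl ψ u
    rw [norm_iteratedFDeriv_zero] at h
    rw [le_div_iff₀ (by positivity)]
    calc ‖ψ u‖ * (1+‖u‖)^K = (1+‖u‖)^K * ‖ψ u‖ := by ring
      _ ≤ _ := h
      _ ≤ Cψ := by rw [hCψ]; norm_num
  have hφb : ∀ v : EuclideanSpace ℝ (Fin d), ‖φ v‖ ≤ Cφ / (1+‖v‖)^m := by
    intro v
    have h := SchwartzMap.one_add_le_sup_seminorm_apply (𝕜 := ℝ) (m := ((m:ℕ), (0:ℕ)))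
      (k := m) (n := 0) le_rfl le_rfl φ v
    rw [norm_iteratedFDeriv_zero] at h
    rw [le_div_iff₀ (by positivity)]
    calc ‖φ v‖ * (1+‖v‖)^m = (1+‖v‖)^m * ‖φ v‖ := by ring
      _ ≤ _ := h
      _ ≤ Cφ := by rw [hCφ]; norm_num
  -- the comparison integrand
  set g : EuclideanSpace ℝ (Fin d) → ℝ := fun z => (1 + ‖z‖) ^ (-((d:ℝ)+1)) with hg
  have hgcont : Continuous g := by
    apply Continuous.rpow_const (continuous_const.add continuous_norm)
    intro z; left; exact (by positivity : (0:ℝ) < 1 + ‖z‖).ne'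
  have hgint : Integrable g := by
    apply integrable_one_add_norm (E := EuclideanSpace ℝ (Fin d))
    rw [finrank_euclideanSpace_fin]
    linarith
  have hgnn : ∀ z, 0 ≤ g z := fun z => Real.rpow_nonneg (by positivity) _
  have hgval : ∀ u : EuclideanSpace ℝ (Fin d), g u = ((1+‖u‖)^(d+1))⁻¹ := by
    intro u
    have h0 : (0:ℝ) < 1 + ‖u‖ := by positivity
    rw [hg]
    show (1 + ‖u‖) ^ (-((d:ℝ)+1)) = _
    rw [← Real.rpow_natCast (1+‖u‖) (d+1), ← Real.rpow_neg h0.le]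
    norm_num
  set J : ℝ := ∫ z, g z with hJ
  have hJ0 : 0 ≤ J := integral_nonneg hgnn
  refine ⟨Cψ * Cφ * c^m * J + 1, by positivity, ?_⟩
  intro j ℓ hℓ x
  set M : Matrix (Fin d) (Fin d) ℝ := shearletB d ℓ * shearletA d j with hM
  have hdet : M.det = 2 ^ ((d + 1) * j) := shearlet_det d j ℓ
  have hdet0 : M.det ≠ 0 := by rw [hdet]; positivity
  set t : ℝ := 1 + (2:ℝ)^j * ‖x‖ with ht
  have ht1 : 1 ≤ t := le_add_of_nonneg_right (by positivity)
  have ht0 : 0 < t := lt_of_lt_of_le one_pos ht1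
  have htN : 0 < t ^ (-N) := Real.rpow_pos_of_pos ht0 _
  -- pointwise estimate
  have hpt : ∀ y : EuclideanSpace ℝ (Fin d),
      ‖ψ (matVec M (x - y))‖ * ‖φ (((2 : ℝ) ^ (2 * j)) • y)‖ ≤
        (Cψ * Cφ * c^m * t^(-N)) * g (matVec M (x - y)) := by
    intro y
    have hkey : t ≤ c * ((1 + ‖matVec M (x - y)‖) * (1 + ‖((2:ℝ)^(2*j)) • y‖)) :=
      key_ineq ℓ hℓ x y
    have hNm : N ≤ (m:ℝ) := Nat.le_ceil N
    have h := aux_real m (d+1) N Cψ Cφ c (1 + ‖matVec M (x - y)‖) (1 + ‖((2:ℝ)^(2*j)) • y‖) t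
      ‖ψ (matVec M (x - y))‖ ‖φ (((2 : ℝ) ^ (2 * j)) • y)‖
      (le_add_of_nonneg_right (norm_nonneg _)) (le_add_of_nonneg_right (norm_nonneg _))
      ht1 hc1 hCψ0 hCφ0 hNm hkey (norm_nonneg _) (norm_nonneg _)
      (hψb _) (hφb _)
    rw [hgval]
    exact h
  -- integrability of the comparison function
  have hcomp : Integrable (fun y => g (matVec M y)) := integrable_comp_matL M hdet0 g hgcont hgint
  have hcomp2 : Integrable (fun y : EuclideanSpace ℝ (Fin d) => g (matVec M (x - y))) :=
    hcomp.comp_sub_left x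
  have hG : Integrable (fun y : EuclideanSpace ℝ (Fin d) =>
      (Cψ * Cφ * c^m * t^(-N)) * g (matVec M (x - y))) := hcomp2.const_mul _
  -- integrate
  have hint : (∫ y : EuclideanSpace ℝ (Fin d),
        ‖ψ (matVec M (x - y))‖ * ‖φ (((2 : ℝ) ^ (2 * j)) • y)‖) ≤
      ∫ y : EuclideanSpace ℝ (Fin d), (Cψ * Cφ * c^m * t^(-N)) * g (matVec M (x - y)) := by
    apply integral_mono_of_nonneg
    · exact Filter.Eventually.of_forall fun y =>
        mul_nonneg (norm_nonneg _) (norm_nonneg _)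
    · exact hG
    · exact Filter.Eventually.of_forall hpt
  have hval : (∫ y : EuclideanSpace ℝ (Fin d),
        (Cψ * Cφ * c^m * t^(-N)) * g (matVec M (x - y)))
      = (Cψ * Cφ * c^m * t^(-N)) * (|M.det|⁻¹ * J) := by
    rw [integral_const_mul]
    congr 1
    rw [show (fun y : EuclideanSpace ℝ (Fin d) => g (matVec M (x - y))) =
      (fun y => (fun w => g (matVec M w)) (x - y)) from rfl]
    rw [integral_sub_left_eq_self (fun w => g (matVec M w)) volume x]
    rw [integral_comp_matL M hdet0 g hgcont, hJ]
  have hdetinv : |M.det|⁻¹ = (2 : ℝ) ^ (-(((d + 1) * j : ℕ) : ℤ)) := by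
    rw [hdet, abs_of_pos (by positivity), zpow_neg, zpow_natCast]
  have hdi0 : (0:ℝ) ≤ |M.det|⁻¹ := by positivity
  calc (∫ y : EuclideanSpace ℝ (Fin d),
        ‖ψ (matVec M (x - y))‖ * ‖φ (((2 : ℝ) ^ (2 * j)) • y)‖)
      ≤ (Cψ * Cφ * c^m * t^(-N)) * (|M.det|⁻¹ * J) := by rw [← hval]; exact hint
    _ = (Cψ * Cφ * c^m * J) * |M.det|⁻¹ * t^(-N) := by ring
    _ ≤ (Cψ * Cφ * c^m * J + 1) * |M.det|⁻¹ * t^(-N) := by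
        have h9 : (0:ℝ) ≤ |M.det|⁻¹ * t^(-N) := mul_nonneg hdi0 htN.le
        nlinarith
    _ = (Cψ * Cφ * c^m * J + 1) * (2 : ℝ) ^ (-(((d + 1) * j : ℕ) : ℤ)) * t^(-N) := by
        rw [hdetinv]
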